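/- For every integer n ≥ 5 and every real q with 0 < q < 4/((n+7)(n-1)), it holds that 2(1-q)^{n-1} - q(1-q)^{n-2}·(n-1)^2/2 - q^2·2·C(n,3) > 0, where C(n,3) = n(n-1)(n-2)/6 is the binomial coefficient. -/

import Mathlib

open Finset

noncomputable def chi (b : Bool) : ℝ := if b then 1 else -1

noncomputable def maj (n : ℕ) (x : Fin n → Bool) : ℝ :=
  Real.sign (∑ i, chi (x i))

def eVec (n : ℕ) : Fin n → Bool := fun i => decide ((i : ℕ) < (n - 1) / 2 + 1)

noncomputable def gfun (n : ℕ) (x : Fin n → Bool) : ℝ :=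
  if x = eVec n ∨ x = (fun i => !(eVec n i)) then - maj n x else maj n x

noncomputable def stab (n : ℕ) (ρ : ℝ) (f : (Fin n → Bool) → ℝ) : ℝ :=
  (1 / 2 ^ n) * ∑ x : Fin n → Bool, ∑ z : Fin n → Bool,
    (∏ i, if z i then (1 - ρ) / 2 else (1 + ρ) / 2) * (f x * f (fun i => xor (x i) (z i)))

noncomputable def phi (n : ℕ) (p : ℝ) (f : (Fin n → Bool) → ℝ) : ℝ :=
  ∑ s : Fin n → Bool, (∏ i, if s i then p else 1 - p) *
    ((1 / 2 ^ n) * ∑ x : Fin n → Bool,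
      |(1 / 2 ^ n) * ∑ z : Fin n → Bool, f (fun i => if s i then x i else z i)|)

noncomputable def binomPMF (m : ℕ) (q : ℝ) (k : ℕ) : ℝ :=
  (m.choose k : ℝ) * q ^ k * (1 - q) ^ (m - k)

noncomputable def binomCollision (m : ℕ) (q : ℝ) : ℝ :=
  ∑ k ∈ Finset.range (m + 1), (binomPMF m q k) ^ 2

theorem stmt13 (n : ℕ) (hn : 5 ≤ n) (q : ℝ) (hq0 : 0 < q)
    (hq1 : q < 4 / (((n : ℝ) + 7) * ((n : ℝ) - 1))) :
    2 * (1 - q) ^ (n - 1) - q * (1 - q) ^ (n - 2) * ((n : ℝ) - 1) ^ 2 / 2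
      - q ^ 2 * 2 * (n.choose 3 : ℝ) > 0 := by
  have hN : (5:ℝ) ≤ (n:ℝ) := by exact_mod_cast hn
  set N : ℝ := (n:ℝ) with hNdef
  have hden : 0 < (N + 7) * (N - 1) := by nlinarith
  have hq4 : q * ((N + 7) * (N - 1)) < 4 := by
    rw [div_eq_mul_inv] at hq1
    calc q * ((N+7)*(N-1)) < 4 * ((N+7)*(N-1))⁻¹ * ((N+7)*(N-1)) := by
          exact mul_lt_mul_of_pos_right hq1 hden
      _ = 4 := by rw [mul_assoc, inv_mul_cancel₀ hden.ne', mul_one]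
  have hqs : q < 1/12 := by nlinarith
  -- choose cast
  have hch : (n.choose 3 : ℝ) = N * (N - 1) * (N - 2) / 6 := by
    have h6 : 6 * n.choose 3 = (n-2) * ((n-1) * n) := by
      have h := Nat.descFactorial_eq_factorial_mul_choose n 3
      rw [show Nat.factorial 3 = 6 from rfl] at h
      rw [← h]; simp [Nat.descFactorial]
    have h7 : ((6 * n.choose 3 : ℕ) : ℝ) = (((n-2) * ((n-1) * n) : ℕ) : ℝ) := by
      exact_mod_cast congrArg (Nat.cast : ℕ → ℝ) h6
    push_cast [Nat.cast_sub (by omega : 1 ≤ n), Nat.cast_sub (by omega : 2 ≤ n)] at h7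
    rw [hNdef]; linarith
  -- Bernoulli
  have hb1 : 1 - (N - 1) * q ≤ (1 - q) ^ (n - 1) := by
    have := one_add_mul_le_pow (a := -q) (by linarith) (n - 1)
    have hc : ((n - 1 : ℕ) : ℝ) = N - 1 := by
      push_cast [Nat.cast_sub (by omega : 1 ≤ n)]; ring
    rw [hc, show (1:ℝ) + -q = 1 - q by ring] at this
    linarith [this]
  have hb2 : (1 - q) ^ (n - 2) ≤ 1 := by
    apply pow_le_one₀ (by linarith) (by linarith)
  have hb2' : q * (1 - q) ^ (n - 2) * (N - 1) ^ 2 / 2 ≤ q * 1 * (N - 1) ^ 2 / 2 := by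
    have h1 : 0 ≤ (N - 1)^2 / 2 := by positivity
    have := mul_le_mul_of_nonneg_left hb2 (le_of_lt hq0)
    nlinarith
  rw [hch]
  have key : 2 * (1 - (N - 1) * q) - q * (N - 1) ^ 2 / 2
      - q ^ 2 * 2 * (N * (N - 1) * (N - 2) / 6) > 0 := by
    nlinarith [mul_pos hq0 (sub_pos.mpr hq4), sq_nonneg q, sq_nonneg (N - 5),
      mul_pos (mul_pos hq0 hq0) (sub_pos.mpr hq4),
      mul_nonneg (le_of_lt hq0) (sq_nonneg (N-1)),
      mul_pos hq0 hden]
  nlinarith [hb1, hb2']
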